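/- Under the smallness conditions v < 1 and v·‖Ã‖ < d₀(1−v)²/4, let X be the solution of X = V(Ã+X) with ‖X‖ ≤ r_min and put H := Ã + X. Then for every z ∈ ℂ with essinf_ω |z − ζ(ω)| > 0, the transfer function admits the factorization M(z) = W(z) ∘ (H − z·I), where W(z) := I − ∫ K(ω)∘(H−ζ(ω))⁻¹ dμ(ω) + z·∫ (z−ζ(ω))⁻¹ · (K(ω)∘(H−ζ(ω))⁻¹) dμ(ω) is a bounded operator on H₁ (all the Bochner integrals converging). -/

import Mathlib

set_option maxHeartbeats 1000000


open MeasureTheory ContinuousLinearMap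
open TopologicalSpace Pointwise

/-- `X` solves the basic equation `X = V₁(Ã + X, Γ)` (with the Bochner integral
well defined). -/
def IsSolution {H : Type*} [NormedAddCommGroup H] [NormedSpace ℂ H] [CompleteSpace H]
    {Ω : Type*} [MeasurableSpace Ω] (μ : Measure Ω)
    (ζ : Ω → ℂ) (K : Ω → H →L[ℂ] H) (A X : H →L[ℂ] H) : Prop :=
  (∀ᵐ ω ∂μ, IsUnit (A + X - ζ ω • (1 : H →L[ℂ] H))) ∧
  Integrable (fun ω =>
    K ω ∘L ((A + X) ∘L Ring.inverse (A + X - ζ ω • (1 : H →L[ℂ] H)))) μ ∧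
  X = ∫ ω, K ω ∘L ((A + X) ∘L Ring.inverse (A + X - ζ ω • (1 : H →L[ℂ] H))) ∂μ

/-- The analytically continued transfer function
`M(z) = Ã - z + ∫ z/(z-ζ(ω)) K(ω) dμ(ω)`. -/
noncomputable def Mtr {H : Type*} [NormedAddCommGroup H] [NormedSpace ℂ H] [CompleteSpace H]
    {Ω : Type*} [MeasurableSpace Ω] (μ : Measure Ω)
    (ζ : Ω → ℂ) (K : Ω → H →L[ℂ] H) (A : H →L[ℂ] H) (z : ℂ) : H →L[ℂ] H :=
  A - z • (1 : H →L[ℂ] H) + ∫ ω, (z / (z - ζ ω)) • K ω ∂μ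

/-- The factor `W(z)` of the factorization theorem (4.2). -/
noncomputable def Wfac {H : Type*} [NormedAddCommGroup H] [NormedSpace ℂ H] [CompleteSpace H]
    {Ω : Type*} [MeasurableSpace Ω] (μ : Measure Ω)
    (ζ : Ω → ℂ) (K : Ω → H →L[ℂ] H) (Hop : H →L[ℂ] H) (z : ℂ) : H →L[ℂ] H :=
  (1 : H →L[ℂ] H)
    - (∫ ω, K ω ∘L Ring.inverse (Hop - ζ ω • (1 : H →L[ℂ] H)) ∂μ)
    + z • ∫ ω, (z - ζ ω)⁻¹ • (K ω ∘L Ring.inverse (Hop - ζ ω • (1 : H →L[ℂ] H))) ∂μ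

section SpectralAux
variable {𝔸 : Type*} [CStarAlgebra 𝔸]

lemma aux_isUnit {a : 𝔸} {c : ℂ} {d : ℝ} (hd : 0 < d)
    (hdist : d ≤ Metric.infDist c (spectrum ℂ a)) : IsUnit (a - c • 1) := by
  have hc : c ∉ spectrum ℂ a := by
    intro hmem
    rw [Metric.infDist_zero_of_mem hmem] at hdist; linarith
  rw [spectrum.notMem_iff] at hc
  have h : a - c • (1 : 𝔸) = -(algebraMap ℂ 𝔸 c - a) := by
    rw [Algebra.algebraMap_eq_smul_one, neg_sub]
  rw [h]
  exact hc.neg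

lemma aux_norm_inverse_le {a : 𝔸} (ha : IsSelfAdjoint a) {c : ℂ} {d : ℝ} (hd : 0 < d)
    (hdist : d ≤ Metric.infDist c (spectrum ℂ a)) :
    ‖Ring.inverse (a - c • (1 : 𝔸))‖ ≤ 1 / d := by
  have hu : IsUnit (a - c • (1 : 𝔸)) := aux_isUnit hd hdist
  set u := hu.unit with hu_def
  have hcoe : (u : 𝔸) = a - c • 1 := hu.unit_spec
  -- normality of u
  have hcomm : Commute ((u : 𝔸)) (star (u : 𝔸)) := by
    rw [hcoe, star_sub, star_smul, star_one, ha.star_eq]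
    show (a - c • 1) * (a - star c • 1) = (a - star c • 1) * (a - c • 1)
    simp only [sub_mul, mul_sub, smul_mul_assoc, mul_smul_comm, one_mul, mul_one, smul_smul,
      smul_sub]
    rw [mul_comm c (star c)]
    abel
  have hs : IsUnit (star (u : 𝔸)) := hu.star
  have hinv : ((hs.unit⁻¹ : 𝔸ˣ) : 𝔸) = star ((u⁻¹ : 𝔸ˣ) : 𝔸) := by
    apply Units.inv_eq_of_mul_eq_one_right
    rw [hs.unit_spec, ← star_mul, Units.inv_mul, star_one]
  have hnormal : IsStarNormal ((u⁻¹ : 𝔸ˣ) : 𝔸) := by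
    constructor
    rw [← hinv]
    have h1 : Commute ((u : 𝔸)) ((hs.unit : 𝔸ˣ) : 𝔸) := by rw [hs.unit_spec]; exact hcomm
    exact ((h1.units_inv_left).units_inv_right).symm
  have hrad : spectralRadius ℂ ((u⁻¹ : 𝔸ˣ) : 𝔸) = ‖((u⁻¹ : 𝔸ˣ) : 𝔸)‖₊ :=
    IsStarNormal.spectralRadius_eq_nnnorm _
  have hbound : spectralRadius ℂ ((u⁻¹ : 𝔸ˣ) : 𝔸) ≤ ENNReal.ofReal (1 / d) := by
    refine iSup₂_le fun k hk => ?_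
    by_cases hk0 : k = 0
    · simp [hk0]
    · have hk' : ((Units.mk0 k hk0 : ℂˣ) : ℂ) ∈ spectrum ℂ ((u⁻¹ : 𝔸ˣ) : 𝔸) := hk
      have hmem : (((Units.mk0 k hk0)⁻¹ : ℂˣ) : ℂ) ∈ spectrum ℂ ((u⁻¹⁻¹ : 𝔸ˣ) : 𝔸) :=
        spectrum.inv_mem_iff.mp hk'
      rw [inv_inv] at hmem
      have hspec : spectrum ℂ a - ({c} : Set ℂ) = spectrum ℂ ((u : 𝔸)) := by
        rw [hcoe, ← Algebra.algebraMap_eq_smul_one]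
        exact spectrum.sub_singleton_eq a c
      have hmem' : k⁻¹ ∈ spectrum ℂ a - ({c} : Set ℂ) := by
        rw [hspec]
        simpa using hmem
      obtain ⟨lam, hlam, cc, hcc, hsum⟩ := Set.mem_sub.mp hmem'
      rw [Set.mem_singleton_iff] at hcc
      rw [hcc] at hsum
      have hdk : d ≤ ‖k⁻¹‖ := by
        calc d ≤ Metric.infDist c (spectrum ℂ a) := hdist
          _ ≤ dist c lam := Metric.infDist_le_dist_of_mem hlam
          _ = ‖lam - c‖ := by rw [dist_eq_norm, norm_sub_rev]
          _ = ‖k⁻¹‖ := by rw [hsum]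
      have hkpos : (0 : ℝ) < ‖k‖ := norm_pos_iff.mpr hk0
      have : ‖k‖ ≤ 1 / d := by
        rw [norm_inv] at hdk
        rw [le_div_iff₀ hd]
        calc ‖k‖ * d ≤ ‖k‖ * ‖k‖⁻¹ := mul_le_mul_of_nonneg_left hdk (norm_nonneg k)
          _ = 1 := mul_inv_cancel₀ hkpos.ne'
      rw [← enorm_eq_nnnorm, ← ofReal_norm]
      exact ENNReal.ofReal_le_ofReal this
  have : ‖((u⁻¹ : 𝔸ˣ) : 𝔸)‖ ≤ 1 / d := by
    rw [hrad, ← enorm_eq_nnnorm, ← ofReal_norm] at hbound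
    exact (ENNReal.ofReal_le_ofReal_iff (by positivity)).mp hbound
  rw [← hcoe, Ring.inverse_unit]
  exact this

end SpectralAux

lemma aux_sm {H : Type*} [NormedAddCommGroup H] [NormedSpace ℂ H] [CompleteSpace H]
    (T : H →L[ℂ] H) :
    StronglyMeasurable (fun c : ℂ => Ring.inverse (T - c • (1 : H →L[ℂ] H))) := by
  letI : MeasurableSpace (H →L[ℂ] H) := borel _
  haveI : BorelSpace (H →L[ℂ] H) := ⟨rfl⟩
  set g : ℂ → (H →L[ℂ] H) := fun c => Ring.inverse (T - c • 1) with hg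
  have hf : Continuous fun c : ℂ => T - c • (1 : H →L[ℂ] H) := by fun_prop
  set U : Set ℂ := (fun c : ℂ => T - c • (1 : H →L[ℂ] H)) ⁻¹' {x : H →L[ℂ] H | IsUnit x}
    with hU
  have hUopen : IsOpen U := Units.isOpen.preimage hf
  have hcont : ContinuousOn g U := by
    refine ContinuousOn.comp (t := {x : H →L[ℂ] H | IsUnit x})
      (fun x hx => (NormedRing.inverse_continuousAt hx.unit).continuousWithinAt)
      hf.continuousOn (fun c hc => hc)
  have hzero : ∀ c ∉ U, g c = 0 := fun c hc => Ring.inverse_non_unit _ hc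
  rw [stronglyMeasurable_iff_measurable_separable]
  constructor
  · apply measurable_of_isOpen
    intro V hV
    rw [← Set.inter_union_compl (g ⁻¹' V) U]
    apply MeasurableSet.union
    · rw [Set.inter_comm]
      exact (hcont.isOpen_inter_preimage hUopen hV).measurableSet
    · by_cases h0 : (0 : H →L[ℂ] H) ∈ V
      · have : g ⁻¹' V ∩ Uᶜ = Uᶜ := by
          apply Set.inter_eq_right.mpr
          intro c hc
          simp only [Set.mem_preimage]
          rw [hzero c hc]
          exact h0
        rw [this]
        exact hUopen.isClosed_compl.measurableSet
      · have : g ⁻¹' V ∩ Uᶜ = ∅ := by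
          ext c
          simp only [Set.mem_inter_iff, Set.mem_preimage, Set.mem_compl_iff,
            Set.mem_empty_iff_false, iff_false, not_and]
          intro hgc hc
          rw [hzero c hc] at hgc
          exact h0 hgc
        rw [this]
        exact MeasurableSet.empty
  · have h1 : IsSeparable (g '' U) := by
      have := isSeparable_range (continuousOn_iff_continuous_restrict.mp hcont)
      rwa [Set.range_restrict] at this
    refine ((h1.union (Set.countable_singleton 0).isSeparable).mono ?_)
    rintro x ⟨c, rfl⟩
    by_cases hc : c ∈ U
    · exact Or.inl ⟨c, hc, rfl⟩
    · exact Or.inr (by simp [hzero c hc])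


/-- Theorem 4.1 (`factorization`), formulas (4.1)–(4.2): for every `z` with
`essinf |z - ζ(ω)| > 0` the transfer function factorizes as
`M(z) = W(z)(H - z)` with `H = Ã + X`, all Bochner integrals converging. -/
theorem transfer_function_factorization
    {H : Type*} [NormedAddCommGroup H] [InnerProductSpace ℂ H] [CompleteSpace H]
    {Ω : Type*} [MeasurableSpace Ω] (μ : Measure Ω)
    (ζ : Ω → ℂ) (hζ : Measurable ζ)
    (K : Ω → H →L[ℂ] H) (hK : Integrable K μ)
    (A : H →L[ℂ] H) (hA : IsSelfAdjoint A)
    (d₀ : ℝ) (hd₀ : 0 < d₀)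
    (hdist : ∀ᵐ ω ∂μ, d₀ ≤ Metric.infDist (ζ ω) (spectrum ℂ A))
    (hvInt : Integrable (fun ω => ‖K ω‖ / Metric.infDist (ζ ω) (spectrum ℂ A)) μ)
    (v : ℝ) (hv : v = ∫ ω, ‖K ω‖ / Metric.infDist (ζ ω) (spectrum ℂ A) ∂μ)
    (hv1 : v < 1) (hv2 : v * ‖A‖ < d₀ * (1 - v) ^ 2 / 4)
    (X : H →L[ℂ] H)
    (hXnorm : ‖X‖ ≤ d₀ * (1 - v) / 2 -
      Real.sqrt (d₀ ^ 2 * (1 - v) ^ 2 / 4 - d₀ * v * ‖A‖))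
    (hXsol : IsSolution μ ζ K A X)
    (z : ℂ) (hz : ∃ ε > (0 : ℝ), ∀ᵐ ω ∂μ, ε ≤ ‖z - ζ ω‖) :
    Integrable (fun ω => (z / (z - ζ ω)) • K ω) μ ∧
    Integrable (fun ω =>
      K ω ∘L Ring.inverse (A + X - ζ ω • (1 : H →L[ℂ] H))) μ ∧
    Integrable (fun ω =>
      (z - ζ ω)⁻¹ • (K ω ∘L Ring.inverse (A + X - ζ ω • (1 : H →L[ℂ] H)))) μ ∧
    Mtr μ ζ K A z = Wfac μ ζ K (A + X) z ∘L (A + X - z • (1 : H →L[ℂ] H)) := by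
  obtain ⟨hunit, hint, hXeq⟩ := hXsol
  obtain ⟨ε, hε, hzε⟩ := hz
  -- basic positivity facts
  have hv0 : 0 ≤ v := by
    rw [hv]
    exact integral_nonneg fun ω => div_nonneg (norm_nonneg _) Metric.infDist_nonneg
  have hX2 : ‖X‖ ≤ d₀ / 2 := by
    nlinarith [Real.sqrt_nonneg (d₀ ^ 2 * (1 - v) ^ 2 / 4 - d₀ * v * ‖A‖), norm_nonneg X]
  -- a.e. bound on the resolvent of A + X
  have hRbound : ∀ᵐ ω ∂μ,
      ‖Ring.inverse (A + X - ζ ω • (1 : H →L[ℂ] H))‖ ≤ 2 / d₀ := by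
    filter_upwards [hunit, hdist] with ω hu hd
    have hP : ‖Ring.inverse (A - ζ ω • (1 : H →L[ℂ] H))‖ ≤ 1 / d₀ :=
      aux_norm_inverse_le hA hd₀ hd
    have hPu : IsUnit (A - ζ ω • (1 : H →L[ℂ] H)) := aux_isUnit hd₀ hd
    set P := Ring.inverse (A - ζ ω • (1 : H →L[ℂ] H)) with hPdef
    have hwcoe : ((hu.unit : (H →L[ℂ] H)ˣ) : H →L[ℂ] H)
        = A + X - ζ ω • (1 : H →L[ℂ] H) := hu.unit_spec
    have h1 : P * ((hu.unit : (H →L[ℂ] H)ˣ) : H →L[ℂ] H) = 1 + P * X := by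
      rw [hwcoe]
      have hsplit : A + X - ζ ω • (1 : H →L[ℂ] H)
          = (A - ζ ω • (1 : H →L[ℂ] H)) + X := by abel
      rw [hsplit, mul_add, Ring.inverse_mul_cancel _ hPu]
    have h2 : P = ((hu.unit⁻¹ : (H →L[ℂ] H)ˣ) : H →L[ℂ] H)
        + P * X * ((hu.unit⁻¹ : (H →L[ℂ] H)ˣ) : H →L[ℂ] H) := by
      have := congrArg (fun y => y * ((hu.unit⁻¹ : (H →L[ℂ] H)ˣ) : H →L[ℂ] H)) h1
      simp only [add_mul, one_mul] at this
      rw [mul_assoc] at this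
      rw [Units.mul_inv, mul_one] at this
      convert this using 2
    have key : ((hu.unit⁻¹ : (H →L[ℂ] H)ˣ) : H →L[ℂ] H)
        = P - P * X * ((hu.unit⁻¹ : (H →L[ℂ] H)ˣ) : H →L[ℂ] H) :=
      eq_sub_of_add_eq h2.symm
    have hRw := Ring.inverse_unit hu.unit
    rw [hwcoe] at hRw
    rw [hRw]
    set a := ‖((hu.unit⁻¹ : (H →L[ℂ] H)ˣ) : H →L[ℂ] H)‖ with ha
    have hineq : a ≤ 1 / d₀ + 1 / d₀ * ‖X‖ * a := by
      calc a = ‖P - P * X * ((hu.unit⁻¹ : (H →L[ℂ] H)ˣ) : H →L[ℂ] H)‖ := by rw [← key]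
        _ ≤ ‖P‖ + ‖P * X * ((hu.unit⁻¹ : (H →L[ℂ] H)ˣ) : H →L[ℂ] H)‖ := norm_sub_le _ _
        _ ≤ ‖P‖ + ‖P‖ * ‖X‖ * a := by
            gcongr
            calc ‖P * X * _‖ ≤ ‖P * X‖ * a := norm_mul_le _ _
              _ ≤ ‖P‖ * ‖X‖ * a := by
                  have := norm_mul_le P X
                  have ha0 : 0 ≤ a := norm_nonneg _
                  nlinarith
        _ ≤ 1 / d₀ + 1 / d₀ * ‖X‖ * a := by
            have ha0 : 0 ≤ a := norm_nonneg _
            have hX0 : 0 ≤ ‖X‖ := norm_nonneg _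
            nlinarith [mul_le_mul_of_nonneg_right hP (mul_nonneg hX0 ha0)]
    have ha0 : 0 ≤ a := norm_nonneg _
    rw [le_div_iff₀ hd₀]
    have hmul : a * d₀ ≤ (1 / d₀ + 1 / d₀ * ‖X‖ * a) * d₀ :=
      mul_le_mul_of_nonneg_right hineq hd₀.le
    have hexp : (1 / d₀ + 1 / d₀ * ‖X‖ * a) * d₀ = 1 + ‖X‖ * a := by
      field_simp
    rw [hexp] at hmul
    nlinarith [mul_le_mul_of_nonneg_right hX2 ha0]
  
  -- measurability of the resolvent
  have mR : AEStronglyMeasurable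
      (fun ω => Ring.inverse (A + X - ζ ω • (1 : H →L[ℂ] H))) μ :=
    ((aux_sm (A + X)).comp_measurable hζ).aestronglyMeasurable
  have hKsm := hK.aestronglyMeasurable
  -- integrability of K ∘ R
  have h2int : Integrable (fun ω =>
      K ω ∘L Ring.inverse (A + X - ζ ω • (1 : H →L[ℂ] H))) μ := by
    refine Integrable.mono' (hK.norm.const_mul (2 / d₀)) ?_ ?_
    · exact hKsm.mul mR
    · filter_upwards [hRbound] with ω hb
      calc ‖K ω ∘L Ring.inverse (A + X - ζ ω • (1 : H →L[ℂ] H))‖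
          ≤ ‖K ω‖ * ‖Ring.inverse (A + X - ζ ω • (1 : H →L[ℂ] H))‖ := opNorm_comp_le _ _
        _ ≤ ‖K ω‖ * (2 / d₀) := by
            have h0 : (0:ℝ) ≤ ‖K ω‖ := norm_nonneg _
            exact mul_le_mul_of_nonneg_left hb h0
        _ = 2 / d₀ * ‖K ω‖ := mul_comm _ _
  -- integrability of the weighted K
  have h1int : Integrable (fun ω => (z / (z - ζ ω)) • K ω) μ := by
    refine Integrable.mono' (hK.norm.const_mul (‖z‖ / ε)) ?_ ?_
    · exact ((measurable_const.div (measurable_const.sub hζ)).aestronglyMeasurable).smul hKsm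
    · filter_upwards [hzε] with ω hb
      rw [norm_smul]
      have h1 : ‖z / (z - ζ ω)‖ ≤ ‖z‖ / ε := by
        rw [norm_div]
        exact div_le_div_of_nonneg_left (norm_nonneg z) hε hb
      exact mul_le_mul_of_nonneg_right h1 (norm_nonneg _)
  -- integrability of the weighted K ∘ R
  have h3int : Integrable (fun ω =>
      (z - ζ ω)⁻¹ • (K ω ∘L Ring.inverse (A + X - ζ ω • (1 : H →L[ℂ] H)))) μ := by
    refine Integrable.mono' ((hK.norm.const_mul (2 / d₀)).const_mul (1 / ε)) ?_ ?_
    · exact ((measurable_const.sub hζ).inv.aestronglyMeasurable).smul (hKsm.mul mR)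
    · filter_upwards [hzε, hRbound] with ω h1 h2
      rw [norm_smul]
      have hn1 : ‖(z - ζ ω)⁻¹‖ ≤ 1 / ε := by
        rw [norm_inv, inv_eq_one_div]
        exact div_le_div_of_nonneg_left one_pos.le hε h1
      have hn2 : ‖K ω ∘L Ring.inverse (A + X - ζ ω • (1 : H →L[ℂ] H))‖
          ≤ 2 / d₀ * ‖K ω‖ := by
        calc ‖K ω ∘L Ring.inverse (A + X - ζ ω • (1 : H →L[ℂ] H))‖
            ≤ ‖K ω‖ * ‖Ring.inverse (A + X - ζ ω • (1 : H →L[ℂ] H))‖ := opNorm_comp_le _ _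
          _ ≤ ‖K ω‖ * (2 / d₀) := mul_le_mul_of_nonneg_left h2 (norm_nonneg _)
          _ = 2 / d₀ * ‖K ω‖ := mul_comm _ _
      exact mul_le_mul hn1 hn2 (norm_nonneg _) (by positivity)
  refine ⟨h1int, h2int, h3int, ?_⟩
  -- right multiplication by (A + X - z • 1)
  have hLapp : ∀ Y : H →L[ℂ] H,
      ((ContinuousLinearMap.mul ℂ (H →L[ℂ] H)).flip (A + X - z • (1 : H →L[ℂ] H))) Y
        = Y ∘L (A + X - z • (1 : H →L[ℂ] H)) := fun Y => by
    rw [ContinuousLinearMap.flip_apply, ContinuousLinearMap.mul_apply',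
      ContinuousLinearMap.mul_def]
  have hPT : (∫ ω, K ω ∘L Ring.inverse (A + X - ζ ω • (1 : H →L[ℂ] H)) ∂μ)
        ∘L (A + X - z • (1 : H →L[ℂ] H))
      = ∫ ω, (K ω ∘L Ring.inverse (A + X - ζ ω • (1 : H →L[ℂ] H)))
        ∘L (A + X - z • (1 : H →L[ℂ] H)) ∂μ := by
    have := ((ContinuousLinearMap.mul ℂ (H →L[ℂ] H)).flip
      (A + X - z • (1 : H →L[ℂ] H))).integral_comp_comm h2int
    simp only [hLapp] at this
    exact this.symm
  have hQT : (∫ ω, (z - ζ ω)⁻¹ •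
        (K ω ∘L Ring.inverse (A + X - ζ ω • (1 : H →L[ℂ] H))) ∂μ)
        ∘L (A + X - z • (1 : H →L[ℂ] H))
      = ∫ ω, (z - ζ ω)⁻¹ • ((K ω ∘L Ring.inverse (A + X - ζ ω • (1 : H →L[ℂ] H)))
        ∘L (A + X - z • (1 : H →L[ℂ] H))) ∂μ := by
    have := ((ContinuousLinearMap.mul ℂ (H →L[ℂ] H)).flip
      (A + X - z • (1 : H →L[ℂ] H))).integral_comp_comm h3int
    simp only [hLapp, smul_mul_assoc] at this
    have h2 : ∀ ω, ((z - ζ ω)⁻¹ • (K ω ∘L Ring.inverse (A + X - ζ ω • (1 : H →L[ℂ] H))))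
        ∘L (A + X - z • (1 : H →L[ℂ] H))
        = (z - ζ ω)⁻¹ • ((K ω ∘L Ring.inverse (A + X - ζ ω • (1 : H →L[ℂ] H)))
          ∘L (A + X - z • (1 : H →L[ℂ] H))) := fun ω => smul_comp _ _ _
    simp only [h2] at this
    exact this.symm
  have h4int : Integrable (fun ω =>
      (K ω ∘L Ring.inverse (A + X - ζ ω • (1 : H →L[ℂ] H)))
        ∘L (A + X - z • (1 : H →L[ℂ] H))) μ := by
    have := ((ContinuousLinearMap.mul ℂ (H →L[ℂ] H)).flip
      (A + X - z • (1 : H →L[ℂ] H))).integrable_comp h2int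
    simpa only [hLapp] using this
  have h5int : Integrable (fun ω => z • ((z - ζ ω)⁻¹ •
      ((K ω ∘L Ring.inverse (A + X - ζ ω • (1 : H →L[ℂ] H)))
        ∘L (A + X - z • (1 : H →L[ℂ] H))))) μ := by
    have h0 := ((ContinuousLinearMap.mul ℂ (H →L[ℂ] H)).flip
      (A + X - z • (1 : H →L[ℂ] H))).integrable_comp h3int
    simp only [hLapp] at h0
    have h2 : ∀ ω, ((z - ζ ω)⁻¹ • (K ω ∘L Ring.inverse (A + X - ζ ω • (1 : H →L[ℂ] H))))
        ∘L (A + X - z • (1 : H →L[ℂ] H))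
        = (z - ζ ω)⁻¹ • ((K ω ∘L Ring.inverse (A + X - ζ ω • (1 : H →L[ℂ] H)))
          ∘L (A + X - z • (1 : H →L[ℂ] H))) := fun ω => smul_comp _ _ _
    simp only [h2] at h0
    exact h0.smul z
  -- pointwise identity
  have hptwise : ∀ᵐ ω ∂μ,
      (z / (z - ζ ω)) • K ω
        - K ω ∘L ((A + X) ∘L Ring.inverse (A + X - ζ ω • (1 : H →L[ℂ] H)))
        + (K ω ∘L Ring.inverse (A + X - ζ ω • (1 : H →L[ℂ] H)))
          ∘L (A + X - z • (1 : H →L[ℂ] H))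
        - z • ((z - ζ ω)⁻¹ • ((K ω ∘L Ring.inverse (A + X - ζ ω • (1 : H →L[ℂ] H)))
          ∘L (A + X - z • (1 : H →L[ℂ] H)))) = 0 := by
    filter_upwards [hunit, hzε] with ω hu hεω
    have hzc : z - ζ ω ≠ 0 := by
      intro h
      rw [h, norm_zero] at hεω
      linarith
    show (z / (z - ζ ω)) • K ω
        - K ω * ((A + X) * Ring.inverse (A + X - ζ ω • (1 : H →L[ℂ] H)))
        + (K ω * Ring.inverse (A + X - ζ ω • (1 : H →L[ℂ] H)))
          * (A + X - z • (1 : H →L[ℂ] H))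
        - z • ((z - ζ ω)⁻¹ • ((K ω * Ring.inverse (A + X - ζ ω • (1 : H →L[ℂ] H)))
          * (A + X - z • (1 : H →L[ℂ] H)))) = 0
    set D := A + X - ζ ω • (1 : H →L[ℂ] H) with hD
    set R := Ring.inverse D with hRdef
    have hRD : R * D = 1 := Ring.inverse_mul_cancel _ hu
    have hDR : D * R = 1 := Ring.mul_inverse_cancel _ hu
    have hHopR : (A + X) * R = 1 + ζ ω • R := by
      have hsplit : A + X = D + ζ ω • (1 : H →L[ℂ] H) := by rw [hD]; abel
      rw [hsplit, add_mul, hDR, smul_mul_assoc, one_mul]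
    have hTD : A + X - z • (1 : H →L[ℂ] H) = D - (z - ζ ω) • (1 : H →L[ℂ] H) := by
      rw [hD, sub_smul]; abel
    have hKRT : (K ω * R) * (A + X - z • (1 : H →L[ℂ] H))
        = K ω - (z - ζ ω) • (K ω * R) := by
      rw [hTD, mul_sub, mul_smul_comm, mul_one, mul_assoc, hRD, mul_one]
    rw [hKRT, hHopR, mul_add, mul_one, mul_smul_comm, div_eq_mul_inv]
    match_scalars <;> (field_simp; try ring)
  -- the integral of the pointwise identity
  have hzero : (∫ ω, (z / (z - ζ ω)) • K ω ∂μ)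
      - (∫ ω, K ω ∘L ((A + X) ∘L Ring.inverse (A + X - ζ ω • (1 : H →L[ℂ] H))) ∂μ)
      + (∫ ω, (K ω ∘L Ring.inverse (A + X - ζ ω • (1 : H →L[ℂ] H)))
          ∘L (A + X - z • (1 : H →L[ℂ] H)) ∂μ)
      - z • (∫ ω, (z - ζ ω)⁻¹ • ((K ω ∘L Ring.inverse (A + X - ζ ω • (1 : H →L[ℂ] H)))
          ∘L (A + X - z • (1 : H →L[ℂ] H))) ∂μ) = 0 := by
    have h := integral_congr_ae (g := fun _ : Ω => (0 : H →L[ℂ] H)) hptwise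
    rw [integral_zero] at h
    have hIa : Integrable (fun ω => (z / (z - ζ ω)) • K ω
        - K ω ∘L ((A + X) ∘L Ring.inverse (A + X - ζ ω • (1 : H →L[ℂ] H)))) μ :=
      h1int.sub hint
    have hIb : Integrable (fun ω => (z / (z - ζ ω)) • K ω
        - K ω ∘L ((A + X) ∘L Ring.inverse (A + X - ζ ω • (1 : H →L[ℂ] H)))
        + (K ω ∘L Ring.inverse (A + X - ζ ω • (1 : H →L[ℂ] H)))
          ∘L (A + X - z • (1 : H →L[ℂ] H))) μ := hIa.add h4int
    rw [integral_sub hIb h5int, integral_add hIa h4int, integral_sub h1int hint,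
      integral_smul] at h
    exact h
  rw [← hXeq] at hzero
  -- finish
  show Mtr μ ζ K A z = Wfac μ ζ K (A + X) z ∘L (A + X - z • (1 : H →L[ℂ] H))
  simp only [Mtr, Wfac]
  rw [ContinuousLinearMap.add_comp, ContinuousLinearMap.sub_comp,
    ContinuousLinearMap.smul_comp, hPT, hQT, ContinuousLinearMap.one_def,
    ContinuousLinearMap.id_comp]
  rw [← sub_eq_zero, ← hzero]
  module
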